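/- arXiv:1703.07965 — 3 statements merged into one kernel-verified Lean document; each statement's English description precedes it below -/
import Mathlib

section
/- Let $p \geq 2$ and $\alpha_j^p = \frac{(-1)^{j+1} p (p+j)!}{(p-j-1)!(2j+2)!}$ for $1 \leq j \leq p-1$. Then for all real $x$, $\sum_{j=1}^{p-1} \alpha_j^p x^j = \frac{p^2}{2} + \frac{T_p(1 - x/2) - 1}{x}$ for $x \neq 0$, where $T_p$ denotes the Chebyshev polynomial of the first kind of degree $p$. -/
/-- Coefficients of the local time-stepping scheme in closed form. -/
noncomputable def alphaLTS (p j : ℕ) : ℝ :=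
  (-1 : ℝ) ^ (j + 1) * (p : ℝ) * (Nat.factorial (p + j)) /
    ((Nat.factorial (p - j - 1)) * (Nat.factorial (2 * j + 2)))

noncomputable def cLTS (p k : ℕ) : ℝ :=
  (-1 : ℝ) ^ k * p * (Nat.factorial (p + k - 1)) /
    ((Nat.factorial (p - k)) * (Nat.factorial (2 * k)))

lemma fact_cast_succ (n : ℕ) : (Nat.factorial (n+1) : ℝ) = (n+1) * Nat.factorial n := by
  rw [Nat.factorial_succ]; push_cast; ring

lemma key (a m : ℕ) :
    cLTS (a+m+3) (m+1) - 2 * cLTS (a+m+2) (m+1) + cLTS (a+m+1) (m+1)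
      + cLTS (a+m+2) m = 0 := by
  unfold cLTS
  have e1 : a+m+3 + (m+1) - 1 = (a+2*m+2)+1 := by omega
  have e2 : a+m+3 - (m+1) = (a+1)+1 := by omega
  have e3 : a+m+2 + (m+1) - 1 = (a+2*m+1)+1 := by omega
  have e4 : a+m+2 - (m+1) = a+1 := by omega
  have e5 : a+m+1 + (m+1) - 1 = a+2*m+1 := by omega
  have e6 : a+m+1 - (m+1) = a := by omega
  have e7 : a+m+2 + m - 1 = a+2*m+1 := by omega
  have e8 : a+m+2 - m = (a+1)+1 := by omega
  have e9 : 2*(m+1) = (2*m+1)+1 := by omega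
  have e10 : a+2*m+2 = (a+2*m+1)+1 := by omega
  rw [e1, e2, e3, e4, e5, e6, e7, e8, e9]
  rw [fact_cast_succ, fact_cast_succ, fact_cast_succ, fact_cast_succ, fact_cast_succ, e10,
    fact_cast_succ, fact_cast_succ]
  have ha : (Nat.factorial a : ℝ) ≠ 0 := by exact_mod_cast Nat.factorial_ne_zero a
  have hm : (Nat.factorial (2*m) : ℝ) ≠ 0 := by exact_mod_cast Nat.factorial_ne_zero (2*m)
  have hx : (Nat.factorial (a+2*m+1) : ℝ) ≠ 0 := by exact_mod_cast Nat.factorial_ne_zero _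
  have hs : ((-1:ℝ))^(m+1) = -(-1:ℝ)^m := by ring
  push_cast
  rw [hs]
  field_simp
  ring

lemma c_zero (p : ℕ) (hp : 1 ≤ p) : cLTS p 0 = 1 := by
  obtain ⟨q, rfl⟩ : ∃ q, p = q + 1 := ⟨p - 1, by omega⟩
  unfold cLTS
  have e1 : q + 1 + 0 - 1 = q := by omega
  have e2 : q + 1 - 0 = q + 1 := by omega
  rw [e1, e2]
  rw [fact_cast_succ]
  have ha : (Nat.factorial q : ℝ) ≠ 0 := by exact_mod_cast Nat.factorial_ne_zero q
  push_cast
  simp [Nat.factorial]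
  field_simp
  exact ⟨Nat.cast_add_one_ne_zero q, Nat.factorial_ne_zero q⟩

lemma c_one (p : ℕ) (hp : 1 ≤ p) : cLTS p 1 = -(p:ℝ)^2 / 2 := by
  obtain ⟨q, rfl⟩ : ∃ q, p = q + 1 := ⟨p - 1, by omega⟩
  unfold cLTS
  have e1 : q + 1 + 1 - 1 = q + 1 := by omega
  have e2 : q + 1 - 1 = q := by omega
  rw [e1, e2, fact_cast_succ]
  have ha : (Nat.factorial q : ℝ) ≠ 0 := by exact_mod_cast Nat.factorial_ne_zero q
  push_cast
  norm_num [Nat.factorial]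
  field_simp
  ring

lemma c_top (p : ℕ) (hp : 1 ≤ p) : cLTS p p = (-1:ℝ)^p / 2 := by
  obtain ⟨q, rfl⟩ : ∃ q, p = q + 1 := ⟨p - 1, by omega⟩
  unfold cLTS
  have e1 : q + 1 + (q+1) - 1 = 2*q+1 := by omega
  have e2 : q + 1 - (q+1) = 0 := by omega
  have e3 : 2 * (q+1) = (2*q+1)+1 := by omega
  rw [e1, e2, e3, fact_cast_succ]
  have hx : (Nat.factorial (2*q+1) : ℝ) ≠ 0 := by exact_mod_cast Nat.factorial_ne_zero _
  push_cast
  simp [Nat.factorial]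
  field_simp
  ring

lemma c_topsucc (p : ℕ) : cLTS (p+1) p = (-1:ℝ)^p * (p+1) := by
  unfold cLTS
  have e1 : p + 1 + p - 1 = 2*p := by omega
  have e2 : p + 1 - p = 1 := by omega
  rw [e1, e2]
  have hx : (Nat.factorial (2*p) : ℝ) ≠ 0 := by exact_mod_cast Nat.factorial_ne_zero _
  push_cast
  simp [Nat.factorial]
  field_simp

noncomputable def SLTS (p : ℕ) (x : ℝ) : ℝ := ∑ k ∈ Finset.range (p+1), cLTS p k * x ^ k

lemma Srec (p : ℕ) (hp : 1 ≤ p) (x : ℝ) :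
    SLTS (p+2) x = (2 - x) * SLTS (p+1) x - SLTS p x := by
  unfold SLTS
  rw [Finset.sum_range_succ (n := p+2), Finset.sum_range_succ (n := p+1),
    Finset.sum_range_succ' (f := fun k => cLTS (p+2) k * x ^ k) p,
    Finset.sum_range_succ (n := p+1) (f := fun k => cLTS (p+1) k * x ^ k),
    Finset.sum_range_succ' (f := fun k => cLTS (p+1) k * x ^ k) p,
    Finset.sum_range_succ' (f := fun k => cLTS p k * x ^ k) p]
  have hkey : ∀ k ∈ Finset.range p,
      cLTS (p+2) (k+1) * x ^ (k+1) =
        2 * (cLTS (p+1) (k+1) * x ^ (k+1)) - x * (cLTS (p+1) k * x ^ k)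
          - cLTS p (k+1) * x ^ (k+1) := by
    intro k hk
    have hk' : k < p := Finset.mem_range.mp hk
    obtain ⟨a, rfl⟩ : ∃ a, p = a + k + 1 := ⟨p - k - 1, by omega⟩
    have := key a k
    simp only [show a+k+1+2 = a+k+3 from by omega, show a+k+1+1 = a+k+2 from by omega]
    linear_combination x^(k+1) * this
  rw [Finset.sum_congr rfl hkey]
  have hshift : ∑ k ∈ Finset.range p, x * (cLTS (p+1) k * x ^ k)
      = ∑ k ∈ Finset.range p, x * (cLTS (p+1) (k+1) * x ^ (k+1))
        + x * (cLTS (p+1) 0 * x ^ 0) - x * (cLTS (p+1) p * x ^ p) := by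
    rw [← Finset.sum_range_succ' (fun k => x * (cLTS (p+1) k * x ^ k)) p,
        Finset.sum_range_succ (fun k => x * (cLTS (p+1) k * x ^ k)) p]
    ring
  simp only [Finset.sum_sub_distrib]
  rw [hshift]
  rw [c_zero p hp, c_zero (p+1) (by omega), c_zero (p+2) (by omega),
    c_top (p+1) (by omega), c_top (p+2) (by omega), c_topsucc (p+1), c_topsucc p]
  rw [← Finset.mul_sum, ← Finset.mul_sum]
  push_cast
  ring

lemma cheb_eq (p : ℕ) (hp : 1 ≤ p) (x : ℝ) :
    (Polynomial.Chebyshev.T ℝ (p : ℤ)).eval (1 - x / 2) = SLTS p x := by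
  obtain ⟨n, rfl⟩ : ∃ n, p = n + 1 := ⟨p - 1, by omega⟩
  clear hp
  induction n using Nat.strong_induction_on with
  | _ n ih =>
    match n with
    | 0 =>
      simp [Polynomial.Chebyshev.T_one, SLTS, Finset.sum_range_succ, c_zero, c_one]
      ring
    | 1 =>
      have : ((2:ℕ):ℤ) = 2 := by norm_num
      rw [this, Polynomial.Chebyshev.T_two]
      simp [SLTS, Finset.sum_range_succ, c_zero 2 (by norm_num), c_one 2 (by norm_num),
        c_top 2 (by norm_num)]
      ring
    | (m+2) =>
      have h1 := ih m (by omega)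
      have h2 := ih (m+1) (by omega)
      have hc : ((m+3 : ℕ) : ℤ) = ((m+1 : ℕ) : ℤ) + 2 := by push_cast; ring
      rw [hc, Polynomial.Chebyshev.T_add_two]
      have hc2 : ((m+1 : ℕ) : ℤ) + 1 = ((m+2 : ℕ) : ℤ) := by push_cast; ring
      rw [hc2]
      simp only [Polynomial.eval_sub, Polynomial.eval_mul, Polynomial.eval_ofNat,
        Polynomial.eval_X]
      rw [h1, h2, show m+2+1 = (m+1)+2 from by omega, Srec (m+1) (by omega)]
      ring

lemma alpha_eq_c (p j : ℕ) : alphaLTS p j = cLTS p (j+1) := by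
  unfold alphaLTS cLTS
  rw [show p + (j+1) - 1 = p + j from by omega, show p - (j+1) = p - j - 1 from by omega,
    show 2 * (j+1) = 2*j+2 from by omega]

theorem alphaLTS_generating_function (p : ℕ) (hp : 2 ≤ p) (x : ℝ) (hx : x ≠ 0) :
    ∑ j ∈ Finset.Icc 1 (p - 1), alphaLTS p j * x ^ j =
      (p : ℝ) ^ 2 / 2 +
        ((Polynomial.Chebyshev.T ℝ (p : ℤ)).eval (1 - x / 2) - 1) / x := by
  rw [cheb_eq p (by omega) x]
  obtain ⟨q, rfl⟩ : ∃ q, p = q + 2 := ⟨p - 2, by omega⟩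
  have hS : SLTS (q+2) x
      = x * (∑ k ∈ Finset.range (q+1), cLTS (q+2) (k+2) * x ^ (k+1))
        + cLTS (q+2) 1 * x + cLTS (q+2) 0 := by
    unfold SLTS
    rw [show q+2+1 = q+3 from rfl,
      Finset.sum_range_succ' (fun k => cLTS (q+2) k * x ^ k) (q+2),
      Finset.sum_range_succ' (fun k => cLTS (q+2) (k+1) * x ^ (k+1)) (q+1),
      Finset.mul_sum]
    simp only [pow_zero, mul_one]
    simp only [zero_add, pow_one]
    ring_nf
    rw [add_right_comm]
    congr 1
    apply Finset.sum_congr rfl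
    intro k _
    ring
  have hL : ∑ j ∈ Finset.Icc 1 (q+2-1), alphaLTS (q+2) j * x ^ j
      = ∑ k ∈ Finset.range (q+1), cLTS (q+2) (k+2) * x ^ (k+1) := by
    rw [show q+2-1 = q+1 from by omega, show Finset.Icc 1 (q+1) = Finset.Ico 1 (q+2) from by
      rw [← Finset.Ico_add_one_right_eq_Icc]; rfl, Finset.sum_Ico_eq_sum_range]
    apply Finset.sum_congr (by congr 1)
    intro k _
    rw [alpha_eq_c]
    congr 2 <;> omega
  rw [hL, hS, c_zero (q+2) (by omega), c_one (q+2) (by omega)]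
  push_cast
  field_simp
  ring
end

section
/- Let $p \geq 2$ and $\alpha_j^p = \frac{(-1)^{j+1} p (p+j)!}{(p-j-1)!(2j+2)!}$ for $1 \leq j \leq p-1$. Then for all $\kappa \in [0, 4p^2]$, we have $\left|\frac{2}{p^2} \sum_{j=1}^{p-1} \alpha_j^p \left(\frac{\kappa}{p^2}\right)^j\right| \leq \frac{\kappa}{12}$. -/
open Real Finset

/-! ### Auxiliary lemmas -/

set_option maxHeartbeats 1000000

private lemma sin_ge_sub_cube' {x : ℝ} (hx : 0 ≤ x) : x - x^3/6 ≤ Real.sin x := by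
  have hd : ∀ y : ℝ, HasDerivAt (fun t => Real.sin t - (t - t^3/6)) (Real.cos y - (1 - y^2/2)) y := by
    intro y
    have h1 : HasDerivAt (fun t : ℝ => t - t^3/6) (1 - 3*y^2/6) y := by
      have := ((hasDerivAt_pow 3 y).div_const 6)
      simpa using (hasDerivAt_id' y).fun_sub this
    have := (Real.hasDerivAt_sin y).fun_sub h1
    exact this.congr_deriv (by ring)
  have hmono : MonotoneOn (fun t => Real.sin t - (t - t^3/6)) (Set.Ici (0:ℝ)) := by
    apply monotoneOn_of_deriv_nonneg (convex_Ici 0)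
    · exact (Real.continuous_sin.sub (by continuity)).continuousOn
    · intro y _
      exact (hd y).differentiableAt.differentiableWithinAt
    · intro y _
      rw [(hd y).deriv]
      have := Real.one_sub_sq_div_two_le_cos (x := y)
      linarith
  have := hmono (Set.self_mem_Ici) (Set.mem_Ici.mpr hx) hx
  simp at this
  linarith

private lemma abs_sin_nmul (n : ℕ) (x : ℝ) : |Real.sin (n * x)| ≤ n * |Real.sin x| := by
  induction n with
  | zero => simp
  | succ n ih =>
    have h : ((n : ℝ) + 1) * x = n * x + x := by ring
    push_cast
    rw [h, Real.sin_add]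
    calc |Real.sin (n*x) * Real.cos x + Real.cos (n*x) * Real.sin x|
        ≤ |Real.sin (n*x) * Real.cos x| + |Real.cos (n*x) * Real.sin x| := abs_add_le _ _
      _ ≤ |Real.sin (n*x)| * 1 + 1 * |Real.sin x| := by
          rw [abs_mul, abs_mul]
          gcongr <;> [exact Real.abs_cos_le_one x; exact Real.abs_cos_le_one _]
      _ ≤ (n:ℝ) * |Real.sin x| + 1 * |Real.sin x| := by
          nlinarith [abs_nonneg (Real.sin x)]
      _ = ((n:ℝ)+1) * |Real.sin x| := by ring

private lemma trig_lower (p : ℕ) (v : ℝ) :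
    Real.sin ((p:ℝ)*v)^2 ≤ (p:ℝ)^2 * Real.sin v ^2 := by
  have h := abs_sin_nmul p v
  have h2 : Real.sin ((p:ℝ)*v)^2 = |Real.sin ((p:ℝ)*v)|^2 := (sq_abs _).symm
  rw [h2]
  have h3 : ((p:ℝ)*|Real.sin v|)^2 = (p:ℝ)^2 * Real.sin v^2 := by
    rw [mul_pow, sq_abs]
  rw [← h3]
  exact pow_le_pow_left₀ (abs_nonneg _) h 2

private lemma trig_upper (p : ℕ) (hp : 2 ≤ p) (v : ℝ) (hv0 : 0 ≤ v) (hv : v ≤ π/2) :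
    (p:ℝ)^2 * Real.sin v ^2 - Real.sin ((p:ℝ)*v)^2 ≤ (p:ℝ)^4 * Real.sin v ^4 / 3 := by
  have hπl : 3.141592 < π := Real.pi_gt_d6
  have hπu : π < 3.141593 := Real.pi_lt_d6
  set s := Real.sin v with hs
  have hs0 : 0 ≤ s := Real.sin_nonneg_of_nonneg_of_le_pi hv0 (by linarith)
  have hs1 : s ≤ 1 := Real.sin_le_one v
  have hsv : s ≤ v := Real.sin_le hv0
  have hp0 : (2:ℝ) ≤ (p:ℝ) := by exact_mod_cast hp
  have hq0 : (0:ℝ) < (p:ℝ) := by linarith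
  rcases eq_or_lt_of_le hp with hp2 | hp3
  · -- p = 2
    have hcast : ((p:ℕ):ℝ) = 2 := by rw [← hp2]; norm_num
    rw [hcast]
    have h2 : Real.sin (2*v) = 2 * Real.sin v * Real.cos v := Real.sin_two_mul v
    have hpy : Real.sin v ^2 + Real.cos v ^2 = 1 := Real.sin_sq_add_cos_sq v
    rw [h2]
    nlinarith [sq_nonneg s, sq_nonneg (Real.cos v)]
  · have hp3' : (3:ℝ) ≤ (p:ℝ) := by exact_mod_cast hp3
    by_cases hw : 3 ≤ (p:ℝ)^2 * s^2
    · nlinarith [sq_nonneg (Real.sin ((p:ℝ)*v)), sq_nonneg s]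
    · push_neg at hw
      by_cases hpv : (p:ℝ)*v ≤ π/3
      · -- small-angle case
        have hpv0 : 0 ≤ (p:ℝ)*v := by positivity
        have h1 : (p:ℝ)*s ≤ (p:ℝ)*v := by nlinarith
        have hps0 : 0 ≤ (p:ℝ)*s := by positivity
        have hb2 : (p:ℝ)*v ≤ 1.048 := by nlinarith
        have hA := sin_ge_sub_cube' hpv0
        have hB : (p:ℝ)*s - ((p:ℝ)*s)^3/6 ≤ (p:ℝ)*v - ((p:ℝ)*v)^3/6 := by
          nlinarith [mul_nonneg (sub_nonneg.2 h1)
            (by nlinarith : (0:ℝ) ≤ 6 - ((p:ℝ)*s)^2 - ((p:ℝ)*s)*((p:ℝ)*v) - ((p:ℝ)*v)^2)]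
        have hg : (p:ℝ)*s - ((p:ℝ)*s)^3/6 ≤ Real.sin ((p:ℝ)*v) := by linarith
        have hg0 : 0 ≤ (p:ℝ)*s - ((p:ℝ)*s)^3/6 := by nlinarith
        have hsq : ((p:ℝ)*s - ((p:ℝ)*s)^3/6)^2 ≤ Real.sin ((p:ℝ)*v)^2 :=
          pow_le_pow_left₀ hg0 hg 2
        have hexp : ((p:ℝ)*s - ((p:ℝ)*s)^3/6)^2
            = (p:ℝ)^2*s^2 - (p:ℝ)^4*s^4/3 + (p:ℝ)^6*s^6/36 := by ring
        rw [hexp] at hsq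
        have h6 : 0 ≤ (p:ℝ)^6 * s^6 := by positivity
        linarith
      · push_neg at hpv
        by_cases hpv2 : (p:ℝ)*v ≤ 2*π/3
        · -- middle case
          have hs3 : Real.sin (π/3) ≤ Real.sin ((p:ℝ)*v) := by
            rcases le_total ((p:ℝ)*v) (π/2) with h | h
            · exact Real.sin_le_sin_of_le_of_le_pi_div_two (by linarith) h (by linarith)
            · rw [show Real.sin ((p:ℝ)*v) = Real.sin (π - (p:ℝ)*v) from (Real.sin_pi_sub _).symm]
              exact Real.sin_le_sin_of_le_of_le_pi_div_two (by linarith) (by linarith) (by linarith)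
          have hsqv : Real.sin (π/3) ^2 = 3/4 := by
            rw [Real.sin_pi_div_three, div_pow, Real.sq_sqrt (by norm_num : (0:ℝ) ≤ 3)]
            norm_num
          have hpos : 0 ≤ Real.sin (π/3) := by
            rw [Real.sin_pi_div_three]; positivity
          have h34 : (3:ℝ)/4 ≤ Real.sin ((p:ℝ)*v)^2 := by
            have := pow_le_pow_left₀ hpos hs3 2
            linarith [hsqv ▸ this]
          nlinarith [sq_nonneg ((p:ℝ)^2*s^2 - 3/2)]
        · -- large-angle case : contradiction
          exfalso
          push_neg at hpv2
          have hb0 : (0:ℝ) < 2*π/(3*(p:ℝ)) := by positivity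
          set b := 2*π/(3*(p:ℝ)) with hbdef
          have hqb : (p:ℝ) * b = 2*π/3 := by
            rw [hbdef]; field_simp
          have hvge : b ≤ v := by
            rw [hbdef, div_le_iff₀ (by positivity)]
            nlinarith
          have hble : b ≤ 0.6982 := by
            rw [hbdef, div_le_iff₀ (by positivity)]
            nlinarith
          have hsb : Real.sin b ≤ s :=
            Real.sin_le_sin_of_le_of_le_pi_div_two (by linarith) hv hvge
          have hcube := sin_ge_sub_cube' hb0.le
          have hslb : b - b^3/6 ≤ s := le_trans hcube hsb
          have h1 : (p:ℝ) * (b - b^3/6) ≤ (p:ℝ) * s :=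
            mul_le_mul_of_nonneg_left hslb hq0.le
          have h2 : (p:ℝ)*(b - b^3/6) = 2*π/3 - (2*π/3) * b^2 / 6 := by
            have h : (p:ℝ)*(b - b^3/6) = (p:ℝ)*b - ((p:ℝ)*b)*b^2/6 := by ring
            rw [h, hqb]
          have h3 : (2*π/3) * b^2/6 ≤ 0.1702 := by nlinarith
          have hps : (1.92:ℝ) ≤ (p:ℝ)*s := by
            rw [h2] at h1; linarith
          nlinarith [mul_le_mul hps hps (by norm_num) (by positivity)]

/-! ### The Chebyshev coefficients -/

noncomputable def chebC (p k : ℕ) : ℝ :=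
  if k ≤ p then
    ((-1:ℝ)^k * p * (Nat.factorial (p+k-1)) * 2^k) /
      ((Nat.factorial (p-k)) * (Nat.factorial (2*k))) else 0

private lemma chebC_rec (m k : ℕ) (hm : 1 ≤ m) :
    chebC (m+2) (k+1) = 2 * chebC (m+1) (k+1) - 2 * chebC (m+1) k - chebC m (k+1) := by
  rcases le_or_gt (k+1) m with hc | hc
  · obtain ⟨b, rfl⟩ := Nat.exists_eq_add_of_le hc
    have h1 : k+1+b+2 + (k+1) - 1 = 2*k+b+3 := by omega
    have h2 : k+1+b+2 - (k+1) = b+2 := by omega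
    have h3 : k+1+b+1 + (k+1) - 1 = 2*k+b+2 := by omega
    have h4 : k+1+b+1 - (k+1) = b+1 := by omega
    have h5 : k+1+b+1 + k - 1 = 2*k+b+1 := by omega
    have h6 : k+1+b+1 - k = b+2 := by omega
    have h7 : k+1+b + (k+1) - 1 = 2*k+b+1 := by omega
    have h8 : k+1+b - (k+1) = b := by omega
    rw [chebC, chebC, chebC, chebC, if_pos (by omega), if_pos (by omega),
      if_pos (by omega), if_pos (by omega), h1, h2, h3, h4, h5, h6, h7, h8]
    have f1 : ((2*(k+1)).factorial : ℝ) = (2*k+2)*(2*k+1)*(2*k).factorial := by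
      have h : 2*(k+1) = (2*k+1)+1 := by ring
      rw [h, Nat.factorial_succ, Nat.factorial_succ]; push_cast; ring
    have f2 : ((b+2).factorial : ℝ) = (b+2)*(b+1)*(b.factorial) := by
      rw [Nat.factorial_succ, Nat.factorial_succ]; push_cast; ring
    have f3 : ((b+1).factorial : ℝ) = (b+1)*(b.factorial) := by
      rw [Nat.factorial_succ]; push_cast; ring
    have f4 : ((2*k+b+3).factorial : ℝ) = (2*k+b+3)*(2*k+b+2)*((2*k+b+1).factorial) := by
      rw [show 2*k+b+3 = (2*k+b+2)+1 by ring, Nat.factorial_succ,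
        show 2*k+b+2 = (2*k+b+1)+1 by ring, Nat.factorial_succ]; push_cast; ring
    have f5 : ((2*k+b+2).factorial : ℝ) = (2*k+b+2)*((2*k+b+1).factorial) := by
      rw [show 2*k+b+2 = (2*k+b+1)+1 by ring, Nat.factorial_succ]; push_cast; ring
    rw [f1, f2, f3, f4, f5]
    have hB : ((b.factorial : ℝ)) ≠ 0 := by positivity
    have hG : (((2*k).factorial : ℝ)) ≠ 0 := by positivity
    have hF : (((2*k+b+1).factorial : ℝ)) ≠ 0 := by positivity
    field_simp
    push_cast
    ring
  · rcases Nat.lt_or_ge k (m+1) with hc2 | hc2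
    · have hk : k = m := by omega
      subst hk
      have h1 : k+2 + (k+1) - 1 = 2*k+2 := by omega
      have h2 : k+2 - (k+1) = 1 := by omega
      have h3 : k+1 + (k+1) - 1 = 2*k+1 := by omega
      have h4 : k+1 - (k+1) = 0 := by omega
      have h5 : k+1 + k - 1 = 2*k := by omega
      have h6 : k+1 - k = 1 := by omega
      rw [chebC, chebC, chebC, chebC, if_pos (by omega), if_pos (by omega),
        if_pos (by omega), if_neg (by omega), h1, h2, h3, h4, h5, h6]
      have f1 : ((2*(k+1)).factorial : ℝ) = (2*k+2)*(2*k+1)*(2*k).factorial := by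
        have h : 2*(k+1) = (2*k+1)+1 := by ring
        rw [h, Nat.factorial_succ, Nat.factorial_succ]; push_cast; ring
      have f4 : ((2*k+2).factorial : ℝ) = (2*k+2)*(2*k+1)*((2*k).factorial) := by
        rw [show 2*k+2 = (2*k+1)+1 by ring, Nat.factorial_succ, Nat.factorial_succ]
        push_cast; ring
      have f5 : ((2*k+1).factorial : ℝ) = (2*k+1)*((2*k).factorial) := by
        rw [Nat.factorial_succ]; push_cast; ring
      rw [f1, f4, f5]
      have hG : (((2*k).factorial : ℝ)) ≠ 0 := by positivity
      simp [Nat.factorial]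
      field_simp
      ring
    · rcases le_or_gt (k+1) (m+2) with hc3 | hc3
      · have hk : k = m+1 := by omega
        subst hk
        have h1 : m+2 + (m+2) - 1 = 2*m+3 := by omega
        have h2 : m+2 - (m+2) = 0 := by omega
        have h3 : m+1 + (m+1) - 1 = 2*m+1 := by omega
        have h4 : m+1 - (m+1) = 0 := by omega
        rw [chebC, chebC, chebC, chebC, if_pos (by omega), if_neg (by omega),
          if_pos (by omega), if_neg (by omega), h1, h2, h3, h4]
        have f1 : ((2*(m+2)).factorial : ℝ) = (2*m+4)*((2*m+3).factorial) := by
          rw [show 2*(m+2) = (2*m+3)+1 by ring, Nat.factorial_succ]; push_cast; ring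
        have f2 : ((2*(m+1)).factorial : ℝ) = (2*m+2)*((2*m+1).factorial) := by
          rw [show 2*(m+1) = (2*m+1)+1 by ring, Nat.factorial_succ]; push_cast; ring
        rw [f1, f2]
        have hF : (((2*m+3).factorial : ℝ)) ≠ 0 := by positivity
        have hF2 : (((2*m+1).factorial : ℝ)) ≠ 0 := by positivity
        simp [Nat.factorial]
        field_simp
        ring
      · rw [chebC, chebC, chebC, chebC, if_neg (by omega), if_neg (by omega),
          if_neg (by omega), if_neg (by omega)]
        ring

private lemma chebC_zero (q : ℕ) (hq : 1 ≤ q) : chebC q 0 = 1 := by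
  obtain ⟨r, rfl⟩ := Nat.exists_eq_add_of_le hq
  rw [chebC, if_pos (by omega)]
  have h1 : 1 + r + 0 - 1 = r := by omega
  have h2 : 1 + r - 0 = r + 1 := by omega
  rw [h1, h2, Nat.factorial_succ]
  have h : ((r.factorial : ℝ)) ≠ 0 := by positivity
  push_cast
  field_simp
  rw [Nat.factorial_zero]; push_cast; ring

private lemma chebC_one (q : ℕ) (hq : 1 ≤ q) : chebC q 1 = -((q:ℝ))^2 := by
  obtain ⟨r, rfl⟩ := Nat.exists_eq_add_of_le hq
  rw [chebC, if_pos (by omega)]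
  have h1 : 1 + r + 1 - 1 = r + 1 := by omega
  have h2 : 1 + r - 1 = r := by omega
  rw [h1, h2, show 2*1 = 2 by norm_num]
  rw [show (r+1).factorial = (r+1) * r.factorial from Nat.factorial_succ r]
  have h : ((r.factorial : ℝ)) ≠ 0 := by positivity
  simp [Nat.factorial]
  push_cast
  field_simp
  ring

private lemma chebC_top (q k : ℕ) (h : q < k) : chebC q k = 0 := by
  rw [chebC, if_neg (by omega)]

private lemma cheb_identity (n : ℕ) (θ : ℝ) :
    Real.cos (((n:ℝ)+1) * θ) = ∑ k ∈ Finset.range (n+2), chebC (n+1) k * (1 - Real.cos θ)^k := by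
  induction n using Nat.twoStepInduction with
  | zero =>
    simp only [Nat.cast_zero, zero_add, one_mul]
    rw [Finset.sum_range_succ, Finset.sum_range_succ, Finset.sum_range_zero]
    rw [chebC_zero 1 le_rfl]
    have h : chebC 1 1 = -1 := by
      rw [chebC, if_pos le_rfl]
      norm_num [Nat.factorial]
    rw [h]; ring
  | one =>
    rw [show (((1:ℕ):ℝ)+1) * θ = 2*θ by norm_num, Real.cos_two_mul]
    rw [Finset.sum_range_succ, Finset.sum_range_succ, Finset.sum_range_succ,
      Finset.sum_range_zero, chebC_zero 2 (by norm_num)]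
    have e1 : chebC 2 1 = -4 := by
      rw [chebC, if_pos (by omega)]
      norm_num [Nat.factorial]
    have e2 : chebC 2 2 = 2 := by
      rw [chebC, if_pos (by omega)]
      norm_num [Nat.factorial]
    rw [e1, e2]; ring
  | more n ih1 ih2 =>
    set c := 1 - Real.cos θ with hc
    have key : Real.cos (((n:ℝ)+2+1) * θ)
        = 2 * Real.cos θ * Real.cos (((n:ℝ)+1+1)*θ) - Real.cos (((n:ℝ)+1)*θ) := by
      have a1 : ((n:ℝ)+2+1)*θ = ((n:ℝ)+1+1)*θ + θ := by ring
      have a2 : ((n:ℝ)+1)*θ = ((n:ℝ)+1+1)*θ - θ := by ring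
      rw [a1, a2, Real.cos_add, Real.cos_sub]; ring
    push_cast at ih1 ih2 ⊢
    rw [key, ih1, ih2]
    have hz1 : chebC (n+2) (n+3) = 0 := chebC_top _ _ (by omega)
    have hz2 : chebC (n+1) (n+2) = 0 := chebC_top _ _ (by omega)
    have hz3 : chebC (n+1) (n+3) = 0 := chebC_top _ _ (by omega)
    have emid : ∑ k ∈ range (n+3), chebC (n+2) k * c^k
        = ∑ k ∈ range (n+4), chebC (n+2) k * c^k := by
      rw [Finset.sum_range_succ (n := n+3), hz1]; ring
    have ebot : ∑ k ∈ range (n+2), chebC (n+1) k * c^k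
        = ∑ k ∈ range (n+4), chebC (n+1) k * c^k := by
      rw [Finset.sum_range_succ (n := n+3), Finset.sum_range_succ (n := n+2), hz2, hz3]; ring
    rw [emid, ebot]
    rw [Finset.sum_range_succ' (fun k => chebC (n+3) k * c^k) (n+3),
        Finset.sum_range_succ' (fun k => chebC (n+2) k * c^k) (n+3),
        Finset.sum_range_succ' (fun k => chebC (n+1) k * c^k) (n+3)]
    have hrec : ∀ i, chebC (n+3) (i+1) * c^(i+1)
        = (2 * chebC (n+2) (i+1) - 2 * chebC (n+2) i - chebC (n+1) (i+1)) * c^(i+1) := by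
      intro i
      rw [show n+3 = (n+1)+2 by ring, show n+2 = (n+1)+1 by ring,
        chebC_rec (n+1) i (by omega)]
    rw [Finset.sum_congr rfl (fun i _ => hrec i)]
    rw [chebC_zero (n+3) (by omega), chebC_zero (n+2) (by omega), chebC_zero (n+1) (by omega)]
    have split : ∑ i ∈ range (n+3),
        (2 * chebC (n+2) (i+1) - 2 * chebC (n+2) i - chebC (n+1) (i+1)) * c^(i+1)
        = 2 * (∑ i ∈ range (n+3), chebC (n+2) (i+1) * c^(i+1))
          - 2 * c * (∑ i ∈ range (n+3), chebC (n+2) i * c^i)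
          - ∑ i ∈ range (n+3), chebC (n+1) (i+1) * c^(i+1) := by
      rw [Finset.mul_sum, Finset.mul_sum, ← Finset.sum_sub_distrib, ← Finset.sum_sub_distrib]
      apply Finset.sum_congr rfl
      intro i _
      ring
    rw [split]
    have back : ∑ i ∈ range (n+3), chebC (n+2) i * c^i
        = ∑ i ∈ range (n+3), chebC (n+2) (i+1) * c^(i+1) + chebC (n+2) 0 * c^0 := by
      rw [← Finset.sum_range_succ' (fun k => chebC (n+2) k * c^k) (n+3)]
      rw [Finset.sum_range_succ (n := n+3), hz1]; ring
    rw [back, chebC_zero (n+2) (by omega)]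
    ring

private lemma chebC_eq_alpha (q i : ℕ) (hi : i ≤ q) :
    chebC (q+2) (i+2) = alphaLTS (q+2) (i+1) * 2^(i+2) := by
  rw [chebC, if_pos (by omega), alphaLTS]
  have h1 : q+2 + (i+2) - 1 = q+2+(i+1) := by omega
  have h2 : q+2 - (i+2) = q+2 - (i+1) - 1 := by omega
  have h3 : 2*(i+2) = 2*(i+1)+2 := by omega
  have h4 : (-1:ℝ)^(i+2) = (-1:ℝ)^(i+1+1) := by norm_num
  rw [h1, h2, h3, h4]
  ring

private lemma bridge (p : ℕ) (hp : 2 ≤ p) (θ x : ℝ) (hcos : Real.cos θ = 1 - x/2) :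
    Real.cos ((p:ℝ)*θ)
      = 1 - (p:ℝ)^2*x/2 + x * ∑ j ∈ Finset.Icc 1 (p-1), alphaLTS p j * x^j := by
  obtain ⟨q, rfl⟩ : ∃ q, p = q+2 := ⟨p-2, by omega⟩
  have hc : 1 - Real.cos θ = x/2 := by rw [hcos]; ring
  have hid := cheb_identity (q+1) θ
  have hcast : (((q+1:ℕ)):ℝ)+1 = ((q+2:ℕ):ℝ) := by push_cast; ring
  rw [hcast, show (q+1)+1 = q+2 from rfl, show (q+1)+2 = q+3 from rfl] at hid
  rw [hid, hc]
  -- peel off k = 0 and k = 1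
  rw [Finset.sum_range_succ' (fun k => chebC (q+2) k * (x/2)^k) (q+2),
      Finset.sum_range_succ' (fun k => chebC (q+2) (k+1) * (x/2)^(k+1)) (q+1)]
  rw [chebC_zero (q+2) (by omega), chebC_one (q+2) (by omega)]
  -- reindex the Icc-sum
  have hicc : ∑ j ∈ Finset.Icc 1 (q+2-1), alphaLTS (q+2) j * x^j
      = ∑ i ∈ Finset.range (q+1), alphaLTS (q+2) (i+1) * x^(i+1) := by
    rw [show q+2-1 = q+1 by omega, ← Finset.Ico_add_one_right_eq_Icc, Finset.sum_Ico_eq_sum_range,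
      show q+1+1-1 = q+1 by omega]
    exact Finset.sum_congr rfl (fun i _ => by rw [add_comm 1 i])
  rw [hicc, Finset.mul_sum]
  have hterm : ∀ i ∈ Finset.range (q+1),
      chebC (q+2) (i+1+1) * (x/2)^(i+1+1) = x * (alphaLTS (q+2) (i+1) * x^(i+1)) := by
    intro i hi
    rw [Finset.mem_range] at hi
    have hpow : (2:ℝ)^(i+2) * (x/2)^(i+2) = x^(i+2) := by
      rw [← mul_pow, mul_div_cancel₀ _ (two_ne_zero)]
    calc chebC (q+2) (i+1+1) * (x/2)^(i+1+1)
        = alphaLTS (q+2) (i+1) * ((2:ℝ)^(i+2) * (x/2)^(i+2)) := by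
          rw [show i+1+1 = i+2 from rfl, chebC_eq_alpha q i (by omega)]; ring
      _ = alphaLTS (q+2) (i+1) * x^(i+2) := by rw [hpow]
      _ = x * (alphaLTS (q+2) (i+1) * x^(i+1)) := by ring
  rw [Finset.sum_congr rfl hterm]
  push_cast
  ring

theorem alphaLTS_sum_bound (p : ℕ) (hp : 2 ≤ p) (κ : ℝ)
    (hκ : κ ∈ Set.Icc (0 : ℝ) (4 * (p : ℝ) ^ 2)) :
    |2 / (p : ℝ) ^ 2 * ∑ j ∈ Finset.Icc 1 (p - 1), alphaLTS p j * (κ / (p : ℝ) ^ 2) ^ j| ≤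
      κ / 12 := by
  obtain ⟨hκ0, hκ4⟩ := hκ
  have hp2 : (2:ℝ) ≤ (p:ℝ) := by exact_mod_cast hp
  have hppos : (0:ℝ) < (p:ℝ)^2 := by positivity
  set x := κ / (p:ℝ)^2 with hxdef
  rcases eq_or_lt_of_le hκ0 with hk0 | hk0
  · -- κ = 0
    have hx0 : x = 0 := by rw [hxdef, ← hk0]; simp
    have hsum : ∑ j ∈ Finset.Icc 1 (p-1), alphaLTS p j * x^j = 0 := by
      apply Finset.sum_eq_zero
      intro j hj
      rw [Finset.mem_Icc] at hj
      rw [hx0, zero_pow (by omega : j ≠ 0), mul_zero]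
    rw [hsum, mul_zero, abs_zero, ← hk0]
    norm_num
  · -- κ > 0
    have hx0 : 0 < x := by positivity
    have hx4 : x ≤ 4 := by
      rw [hxdef, div_le_iff₀ hppos]; linarith
    set θ := Real.arccos (1 - x/2) with hθdef
    have hθ0 : 0 ≤ θ := Real.arccos_nonneg _
    have hθπ : θ ≤ π := Real.arccos_le_pi _
    have hcos : Real.cos θ = 1 - x/2 :=
      Real.cos_arccos (by linarith) (by linarith)
    set v := θ/2 with hvdef
    have hv0 : 0 ≤ v := by positivity
    have hvπ : v ≤ π/2 := by rw [hvdef]; linarith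
    set s := Real.sin v with hsdef
    have hs2 : s^2 = x/4 := by
      have h := Real.cos_two_mul v
      have h2 : 2*v = θ := by rw [hvdef]; ring
      rw [h2, hcos] at h
      have hpy := Real.sin_sq_add_cos_sq v
      rw [hsdef]
      nlinarith
    have hScos : Real.cos ((p:ℝ)*θ) = 1 - 2 * Real.sin ((p:ℝ)*v)^2 := by
      have h := Real.cos_two_mul ((p:ℝ)*v)
      have h2 : 2*((p:ℝ)*v) = (p:ℝ)*θ := by rw [hvdef]; ring
      rw [h2] at h
      have hpy := Real.sin_sq_add_cos_sq ((p:ℝ)*v)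
      linarith
    -- the bridge identity
    have hbr := bridge p hp θ x hcos
    set T := ∑ j ∈ Finset.Icc 1 (p-1), alphaLTS p j * x^j with hTdef
    -- D := cos(pθ) - 1 + p²x/2 = x * T
    have hD : x * T = 2 * ((p:ℝ)^2 * s^2 - Real.sin ((p:ℝ)*v)^2) := by
      have : x * T = Real.cos ((p:ℝ)*θ) - 1 + (p:ℝ)^2*x/2 := by rw [hbr]; ring
      rw [this, hScos]
      have : (p:ℝ)^2 * s^2 = (p:ℝ)^2 * x / 4 := by rw [hs2]; ring
      rw [this]; ring
    have hlow : 0 ≤ x * T := by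
      rw [hD]
      have := trig_lower p v
      rw [← hsdef] at this
      linarith
    have hup : x * T ≤ (p:ℝ)^4 * x^2 / 24 := by
      rw [hD]
      have h := trig_upper p hp v hv0 hvπ
      rw [← hsdef] at h
      have hs4 : s^4 = x^2/16 := by
        have : s^4 = (s^2)^2 := by ring
        rw [this, hs2]; ring
      rw [hs4] at h
      linarith
    -- conclude
    have hT0 : 0 ≤ T := nonneg_of_mul_nonneg_right hlow hx0
    have habs : |2 / (p:ℝ)^2 * T| = 2 / (p:ℝ)^2 * T := by
      apply abs_of_nonneg
      positivity
    rw [habs]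
    have hκx : κ = (p:ℝ)^2 * x := by
      rw [hxdef]; field_simp
    rw [hκx]
    rw [div_mul_eq_mul_div, div_le_div_iff₀ hppos (by norm_num)]
    nlinarith [hup]
end

section
/- For $p \geq 2$ and coefficients $\alpha_j^p = \frac{(-1)^{j+1} p(p+j)!}{(p-j-1)!(2j+2)!}$, the polynomial identity $\sum_{j=1}^{p-1} \alpha_j^p x^{j-1} = \frac{p^2 x + 2 T_p(1 - x/2) - 2}{2x^2}$ holds for all $x \neq 0$, where $T_p$ is the Chebyshev polynomial of the first kind of degree $p$. -/
open Finset

/-- auxiliary coefficient -/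
noncomputable def cc (p k : ℕ) : ℝ :=
  (-1 : ℝ) ^ k * p * (Nat.factorial (p + k - 1)) /
    ((Nat.factorial (p - k)) * (Nat.factorial (2 * k)))

/-- zero-padded version -/
noncomputable def ccz (p k : ℕ) : ℝ := if k ≤ p then cc p k else 0

lemma fact_cast (n : ℕ) : ((Nat.factorial (n + 1) : ℝ)) = (n + 1) * Nat.factorial n := by
  rw [Nat.factorial_succ]; push_cast; ring

lemma cc_zero (p : ℕ) (hp : 1 ≤ p) : cc p 0 = 1 := by
  obtain ⟨q, rfl⟩ := Nat.exists_eq_add_of_le hp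
  unfold cc
  have h1 : 1 + q + 0 - 1 = q := by omega
  have h2 : 1 + q - 0 = q + 1 := by omega
  have h3 : 2 * 0 = 0 := by omega
  rw [h1, h2, h3, fact_cast]
  have hq : (Nat.factorial q : ℝ) ≠ 0 := by positivity
  rw [pow_zero, one_mul, Nat.factorial_zero, Nat.cast_one, mul_one,
    div_eq_one_iff_eq (by positivity)]
  push_cast
  ring

lemma cc_one (p : ℕ) (hp : 1 ≤ p) : cc p 1 = -(p : ℝ) ^ 2 / 2 := by
  obtain ⟨q, rfl⟩ := Nat.exists_eq_add_of_le hp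
  unfold cc
  have h1 : 1 + q + 1 - 1 = q + 1 := by omega
  have h2 : 1 + q - 1 = q := by omega
  rw [h1, h2, fact_cast]
  have hq : (Nat.factorial q : ℝ) ≠ 0 := by positivity
  norm_num [Nat.factorial]
  field_simp
  ring

lemma ccz_rec (m k : ℕ) (hm : 1 ≤ m) :
    ccz (m+2) k = 2 * ccz (m+1) k - (if k = 0 then (0:ℝ) else ccz (m+1) (k-1)) - ccz m k := by
  rcases Nat.eq_zero_or_pos k with rfl | hk
  · simp only [ccz, if_pos (by omega : 0 ≤ m+2), if_pos (by omega : 0 ≤ m+1),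
      if_pos (by omega : 0 ≤ m), if_pos rfl]
    rw [cc_zero _ (by omega), cc_zero _ (by omega), cc_zero _ (by omega)]
    norm_num
  obtain ⟨j, rfl⟩ : ∃ j, k = j + 1 := ⟨k-1, by omega⟩
  rw [if_neg (by omega)]
  simp only [Nat.add_sub_cancel]
  by_cases h1 : j + 1 ≤ m
  · obtain ⟨n, rfl⟩ : ∃ n, m = n + (j+1) := ⟨m - (j+1), by omega⟩
    simp only [ccz, if_pos (by omega : j+1 ≤ n+(j+1)+2), if_pos (by omega : j+1 ≤ n+(j+1)+1),
      if_pos (by omega : j ≤ n+(j+1)+1), if_pos (by omega : j+1 ≤ n+(j+1))]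
    unfold cc
    have e1 : n+(j+1)+2+(j+1)-1 = n+2*j+1+1+1 := by omega
    have e2 : n+(j+1)+2-(j+1) = n+1+1 := by omega
    have e3 : 2*(j+1) = 2*j+1+1 := by omega
    have e4 : n+(j+1)+1+(j+1)-1 = n+2*j+1+1 := by omega
    have e5 : n+(j+1)+1-(j+1) = n+1 := by omega
    have e6 : n+(j+1)+1+j-1 = n+2*j+1 := by omega
    have e7 : n+(j+1)+1-j = n+1+1 := by omega
    have e8 : n+(j+1)+(j+1)-1 = n+2*j+1 := by omega
    have e9 : n+(j+1)-(j+1) = n := by omega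
    rw [e1,e2,e3,e4,e5,e6,e7,e8,e9]
    simp only [fact_cast]
    have hA : (Nat.factorial n : ℝ) ≠ 0 := by positivity
    have hB : (Nat.factorial (2*j) : ℝ) ≠ 0 := by positivity
    have hC : (Nat.factorial (n+2*j) : ℝ) ≠ 0 := by positivity
    rw [pow_succ]
    push_cast
    field_simp
    ring
  · by_cases h2 : j ≤ m
    · have hj : j = m := by omega
      subst hj
      simp only [ccz, if_pos (by omega : j+1 ≤ j+2), if_pos (le_refl (j+1)),
        if_pos (by omega : j ≤ j+1), if_neg (by omega : ¬ j+1 ≤ j)]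
      unfold cc
      have e1 : j+2+(j+1)-1 = 2*j+1+1 := by omega
      have e2 : j+2-(j+1) = 1 := by omega
      have e3 : 2*(j+1) = 2*j+1+1 := by omega
      have e4 : j+1+(j+1)-1 = 2*j+1 := by omega
      have e5 : j+1-(j+1) = 0 := by omega
      have e6 : j+1+j-1 = 2*j := by omega
      have e7 : j+1-j = 1 := by omega
      rw [e1,e2,e3,e4,e5,e6,e7]
      simp only [fact_cast, Nat.factorial_one, Nat.factorial_zero]
      have hB : (Nat.factorial (2*j) : ℝ) ≠ 0 := by positivity
      rw [pow_succ]
      push_cast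
      field_simp
      ring
    · by_cases h3 : j ≤ m + 1
      · have hj : j = m + 1 := by omega
        subst hj
        simp only [ccz, if_pos (le_refl (m+2)), if_neg (by omega : ¬ m+2 ≤ m+1),
          if_pos (le_refl (m+1)), if_neg (by omega : ¬ m+2 ≤ m)]
        unfold cc
        have e1 : m+2+(m+1+1)-1 = 2*m+1+1+1 := by omega
        have e2 : m+2-(m+1+1) = 0 := by omega
        have e3 : 2*(m+1+1) = 2*m+1+1+1+1 := by omega
        have e4 : m+1+(m+1)-1 = 2*m+1 := by omega
        have e5 : m+1-(m+1) = 0 := by omega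
        have e6 : 2*(m+1) = 2*m+1+1 := by omega
        rw [e1,e2,e3,e4,e5,e6]
        simp only [fact_cast, Nat.factorial_zero]
        have hB : (Nat.factorial (2*m) : ℝ) ≠ 0 := by positivity
        rw [pow_succ, pow_succ]
        push_cast
        field_simp
        ring
      · simp only [ccz, if_neg (by omega : ¬ j+1 ≤ m+2), if_neg (by omega : ¬ j+1 ≤ m+1),
          if_neg (by omega : ¬ j ≤ m+1), if_neg (by omega : ¬ j+1 ≤ m)]
        ring

lemma sum_ccz (p N : ℕ) (h : p + 1 ≤ N) (x : ℝ) :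
    ∑ k ∈ range (p+1), cc p k * x^k = ∑ k ∈ range N, ccz p k * x^k := by
  have h1 : ∑ k ∈ range (p+1), cc p k * x^k = ∑ k ∈ range (p+1), ccz p k * x^k := by
    refine Finset.sum_congr rfl fun k hk => ?_
    rw [ccz, if_pos (by simpa using Nat.lt_succ_iff.mp (Finset.mem_range.mp hk))]
  rw [h1]
  refine Finset.sum_subset (Finset.range_subset_range.2 h) fun k _ hk => ?_
  rw [ccz, if_neg (by simp at hk ⊢; omega)]
  ring

lemma sum_step (m : ℕ) (hm : 1 ≤ m) (x : ℝ) :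
    (2 - x) * (∑ k ∈ range (m+2), cc (m+1) k * x^k) - ∑ k ∈ range (m+1), cc m k * x^k
      = ∑ k ∈ range (m+3), cc (m+2) k * x^k := by
  rw [sum_ccz (m+1) (m+3) (by omega), sum_ccz m (m+3) (by omega), sum_ccz (m+2) (m+3) (le_refl _)]
  have key : ∀ k ∈ range (m+3), ccz (m+2) k * x^k =
      2*(ccz (m+1) k * x^k) - (if k = 0 then (0:ℝ) else ccz (m+1) (k-1)) * x^k
        - ccz m k * x^k := by
    intro k _
    rw [ccz_rec m k hm]; ring
  rw [Finset.sum_congr rfl key, Finset.sum_sub_distrib, Finset.sum_sub_distrib,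
    ← Finset.mul_sum]
  have hmid : ∑ k ∈ range (m+3), (if k = 0 then (0:ℝ) else ccz (m+1) (k-1)) * x^k
      = x * ∑ k ∈ range (m+3), ccz (m+1) k * x^k := by
    rw [Finset.sum_range_succ' _ (m+2), ← sum_ccz (m+1) (m+3) (by omega),
      sum_ccz (m+1) (m+2) (le_refl _), Finset.mul_sum]
    norm_num
    exact Finset.sum_congr rfl fun k _ => by rw [pow_succ]; ring
  rw [hmid]
  ring

lemma cheb_sum (x : ℝ) : ∀ p : ℕ,
    (Polynomial.Chebyshev.T ℝ ((p+1 : ℕ) : ℤ)).eval (1 - x/2)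
      = ∑ k ∈ range (p+2), cc (p+1) k * x^k ∧
    (Polynomial.Chebyshev.T ℝ ((p+2 : ℕ) : ℤ)).eval (1 - x/2)
      = ∑ k ∈ range (p+3), cc (p+2) k * x^k := by
  intro p
  induction p with
  | zero =>
    constructor
    · norm_num [Polynomial.Chebyshev.T_one, Finset.sum_range_succ]
      rw [cc_zero 1 (le_refl 1), cc_one 1 (le_refl 1)]
      push_cast; ring
    · norm_num [Polynomial.Chebyshev.T_two, Finset.sum_range_succ]
      rw [cc_zero 2 (by omega), cc_one 2 (by omega)]
      norm_num [cc, Nat.factorial]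
      ring
  | succ n ih =>
    obtain ⟨ih1, ih2⟩ := ih
    refine ⟨by convert ih2 using 3, ?_⟩
    have hcast : ((n+1+2 : ℕ) : ℤ) = ((n+1 : ℕ) : ℤ) + 2 := by push_cast; ring
    rw [hcast, Polynomial.Chebyshev.T_add_two]
    have hcast2 : ((n+1 : ℕ) : ℤ) + 1 = ((n+2 : ℕ) : ℤ) := by push_cast; ring
    rw [hcast2]
    simp only [Polynomial.eval_sub, Polynomial.eval_mul, Polynomial.eval_ofNat,
      Polynomial.eval_X]
    rw [ih1, ih2]
    have := sum_step (n+1) (by omega) x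
    calc 2 * (1 - x/2) * (∑ k ∈ range (n+3), cc (n+2) k * x^k)
        - ∑ k ∈ range (n+2), cc (n+1) k * x^k
      = (2 - x) * (∑ k ∈ range (n+1+2), cc (n+1+1) k * x^k)
        - ∑ k ∈ range (n+1+1), cc (n+1) k * x^k := by ring_nf
      _ = ∑ k ∈ range (n+1+3), cc (n+1+2) k * x^k := sum_step (n+1) (by omega) x

lemma alpha_cc (p j : ℕ) : alphaLTS p j = cc p (j+1) := by
  unfold alphaLTS cc
  have e1 : p + (j+1) - 1 = p + j := by omega
  have e2 : p - (j+1) = p - j - 1 := by omega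
  have e3 : 2*(j+1) = 2*j+2 := by omega
  rw [e1, e2, e3]

theorem alphaLTS_generating_function' (p : ℕ) (hp : 2 ≤ p) (x : ℝ) (hx : x ≠ 0) :
    ∑ j ∈ Finset.Icc 1 (p - 1), alphaLTS p j * x ^ (j - 1) =
      ((p : ℝ) ^ 2 * x + 2 * (Polynomial.Chebyshev.T ℝ (p : ℤ)).eval (1 - x / 2) - 2) /
        (2 * x ^ 2) := by
  obtain ⟨q, rfl⟩ : ∃ q, p = q + 2 := ⟨p - 2, by omega⟩
  have hT := (cheb_sum x q).2
  rw [hT]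
  have hpm : q + 2 - 1 = q + 1 := by omega
  rw [hpm, ← Finset.Ico_add_one_right_eq_Icc, Finset.sum_Ico_eq_sum_range]
  have hr : q + 1 + 1 - 1 = q + 1 := by omega
  rw [hr]
  simp only [Nat.add_sub_cancel_left, alpha_cc]
  -- peel two terms from the Chebyshev sum
  rw [Finset.sum_range_succ' _ (q+2), Finset.sum_range_succ' _ (q+1)]
  rw [cc_zero (q+2) (by omega), cc_one (q+2) (by omega)]
  have hsum : ∑ k ∈ range (q+1), cc (q+2) (k+1+1) * x^(k+1+1)
      = (∑ k ∈ range (q+1), cc (q+2) (k+1+1) * x^k) * x^2 := by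
    rw [Finset.sum_mul]
    refine Finset.sum_congr rfl fun k _ => ?_
    rw [pow_add]; ring
  rw [hsum]
  have hLHS : ∑ i ∈ range (q+1), cc (q+2) (1+i+1) * x^i
      = ∑ k ∈ range (q+1), cc (q+2) (k+1+1) * x^k := by
    refine Finset.sum_congr rfl fun k _ => ?_
    congr 2
    omega
  rw [hLHS]
  have hx2 : x^2 ≠ 0 := pow_ne_zero 2 hx
  field_simp
  ring
end
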